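/- Let π : G̃ → G be a double cover of weighted graphs with g(G) = g, and let G₁, …, G_d be the connected components of the dilation subgraph G_dil (d = 0 if π is free). Then the torus rank satisfies t(G̃/G) = b₁(G̃) − b₁(G) = g − 1 − Σ_{i=1}^{d} (g(G_i) − 1) − Σ g(x), where the last sum runs over all vertices x of G not lying in G_dil; equivalently, t(G̃/G) = b₁(G) − 1 − Σ_{i=1}^{d} (b₁(G_i) − 1). -/

import Mathlib

open scoped Classical

structure HGraph where
  V : Type
  H : Type
  [fintV : Fintype V]
  [fintH : Fintype H]
  [decV : DecidableEq V]
  [decH : DecidableEq H]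
  root : H → V
  inv : H → H
  inv_inv : ∀ h, inv (inv h) = h
  inv_ne : ∀ h, inv h ≠ h

attribute [instance] HGraph.fintV HGraph.fintH HGraph.decV HGraph.decH

namespace HGraph

variable (G : HGraph)

/-- The setoid on half-edges whose classes are the edges. -/
def edgeSetoid : Setoid G.H where
  r h h' := h' = h ∨ h' = G.inv h
  iseqv := by
    refine ⟨fun h => Or.inl rfl, ?_, ?_⟩
    · rintro a b (rfl | rfl)
      · exact Or.inl rfl
      · exact Or.inr (G.inv_inv a).symm
    · rintro a b c (rfl | rfl) hbc
      · exact hbc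
      · rcases hbc with rfl | rfl
        · exact Or.inr rfl
        · exact Or.inl (G.inv_inv a)

instance edgeDec : DecidableRel G.edgeSetoid.r := fun _ _ => instDecidableOr

/-- The edges of a graph: orbits of the involution on half-edges. -/
def Edge := Quotient G.edgeSetoid

instance : Fintype G.Edge := @Quotient.fintype _ _ G.edgeSetoid G.edgeDec
instance : DecidableEq G.Edge := @Quotient.decidableEq _ G.edgeSetoid G.edgeDec

/-- The edge underlying a half-edge. -/
def edge (h : G.H) : G.Edge := Quotient.mk G.edgeSetoid h

lemma edge_inv (h : G.H) : G.edge (G.inv h) = G.edge h :=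
  Quotient.sound (Or.inr (G.inv_inv h).symm)

/-- The valence of a vertex: the number of half-edges rooted at it. -/
def val (v : G.V) : ℕ := (Finset.univ.filter fun h => G.root h = v).card

/-- Two vertices are adjacent through an edge belonging to `S`. -/
def adjOn (S : Finset G.Edge) (v w : G.V) : Prop :=
  ∃ h, G.edge h ∈ S ∧ G.root h = v ∧ G.root (G.inv h) = w

/-- The spanning subgraph with edge set `S` is connected. -/
def ConnectedOn (S : Finset G.Edge) : Prop :=
  ∀ v w : G.V, Relation.ReflTransGen (G.adjOn S) v w

/-- The graph is connected. -/
def Connected : Prop := Nonempty G.V ∧ G.ConnectedOn Finset.univ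

/-- Euler characteristic of a vertex, for a genus function `gV`. -/
def chiZ (gV : G.V → ℤ) (v : G.V) : ℤ := 2 - 2 * gV v - G.val v

/-- The genus of a (connected) weighted graph. -/
def genusZ (gV : G.V → ℤ) : ℤ :=
  (Fintype.card G.Edge : ℤ) - Fintype.card G.V + 1 + ∑ v, gV v

/-- The number of connected components of the spanning subgraph with edge set `S`. -/
noncomputable def ncomp (S : Finset G.Edge) : ℕ :=
  Nat.card (Quotient (Relation.EqvGen.setoid (G.adjOn S)))

end HGraph

/-- A harmonic morphism of graphs: a graph morphism together with local degrees. -/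
structure HarmonicTo (Gt G : HGraph) where
  fV : Gt.V → G.V
  fH : Gt.H → G.H
  root_comm : ∀ h, G.root (fH h) = fV (Gt.root h)
  inv_comm : ∀ h, fH (Gt.inv h) = G.inv (fH h)
  dV : Gt.V → ℕ
  dH : Gt.H → ℕ
  dV_pos : ∀ v, 0 < dV v
  dH_pos : ∀ h, 0 < dH h
  dH_inv : ∀ h, dH (Gt.inv h) = dH h
  harm : ∀ (w : Gt.V) (h : G.H), G.root h = fV w →
    dV w = ∑ x ∈ Finset.univ.filter (fun x => Gt.root x = w ∧ fH x = h), dH x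

namespace HarmonicTo

variable {Gt G : HGraph} (f : HarmonicTo Gt G)

/-- The induced map on edges. -/
def fE : Gt.Edge → G.Edge :=
  Quotient.lift (fun h => G.edge (f.fH h)) (by
    rintro a b (rfl | rfl)
    · rfl
    · show G.edge (f.fH a) = G.edge (f.fH (Gt.inv a))
      rw [f.inv_comm]
      exact (G.edge_inv _).symm)

/-- The local degree of an edge. -/
def dE : Gt.Edge → ℕ :=
  Quotient.lift f.dH (by
    rintro a b (rfl | rfl)
    · rfl
    · exact (f.dH_inv a).symm)

/-- The ramification degree at a vertex of the source. -/
def Ram (gVt : Gt.V → ℤ) (gV : G.V → ℤ) (w : Gt.V) : ℤ :=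
  (f.dV w : ℤ) * G.chiZ gV (f.fV w) - Gt.chiZ gVt w

end HarmonicTo

namespace HarmonicTo

variable {Gt G : HGraph} (f : HarmonicTo Gt G)

/-- A vertex of the target of a double cover is dilated if it has a unique preimage. -/
def DilV (x : G.V) : Prop := Nat.card {w : Gt.V // f.fV w = x} = 1

/-- An edge of the target of a double cover is dilated if it has a unique preimage. -/
def DilE (e : G.Edge) : Prop := Nat.card {a : Gt.Edge // f.fE a = e} = 1

/-- Adjacency through a dilated edge. -/
def dilAdj (v w : G.V) : Prop :=
  ∃ h, f.DilE (G.edge h) ∧ G.root h = v ∧ G.root (G.inv h) = w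

/-- Reachability inside the dilation subgraph. -/
def dilReach (v w : G.V) : Prop := Relation.ReflTransGen f.dilAdj v w

/-- The valence of a vertex inside the dilation subgraph. -/
noncomputable def dval (x : G.V) : ℕ :=
  Nat.card {h : G.H // G.root h = x ∧ f.DilE (G.edge h)}

/-- The genus of the connected component of the dilation subgraph containing `y`. -/
noncomputable def dilCompGenus (gV : G.V → ℕ) (y : G.V) : ℤ :=
  (Nat.card {e : G.Edge // f.DilE e ∧ f.dilReach y (G.root (Quotient.out e))} : ℤ)
    - Nat.card {z : G.V // f.dilReach y z} + 1
    + ∑ᶠ (z : G.V) (_ : f.dilReach y z), (gV z : ℤ)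

/-- The first Betti number of the connected component of the dilation subgraph containing `y`. -/
noncomputable def dilCompB1 (y : G.V) : ℤ :=
  (Nat.card {e : G.Edge // f.DilE e ∧ f.dilReach y (G.root (Quotient.out e))} : ℤ)
    - Nat.card {z : G.V // f.dilReach y z} + 1

/-- The vertices of the dilation subgraph. -/
def DilVtx (f : HarmonicTo Gt G) : Type := {x : G.V // f.DilV x}

instance : Finite (DilVtx f) := by
  unfold DilVtx; infer_instance

/-- The setoid on dilated vertices whose classes are the connected components of the dilation
subgraph. -/
def dilSetoid (f : HarmonicTo Gt G) : Setoid (DilVtx f) :=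
  Relation.EqvGen.setoid (fun a b => f.dilAdj a.1 b.1)

/-- The set of connected components of the dilation subgraph. -/
def DilComp (f : HarmonicTo Gt G) : Type := Quotient (dilSetoid f)

instance : Finite (DilComp f) := by
  unfold DilComp; exact Quotient.finite _

/-- The genus of a connected component of the dilation subgraph. -/
noncomputable def dilCompGenusQ (gV : G.V → ℕ) (c : DilComp f) : ℤ :=
  (Nat.card {e : G.Edge // f.DilE e ∧ ∃ a : DilVtx f,
      Quotient.mk (dilSetoid f) a = c ∧ a.1 = G.root (Quotient.out e)} : ℤ)
    - Nat.card {a : DilVtx f // Quotient.mk (dilSetoid f) a = c} + 1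
    + ∑ᶠ (a : DilVtx f) (_ : Quotient.mk (dilSetoid f) a = c), (gV a.1 : ℤ)

/-- The first Betti number of a connected component of the dilation subgraph. -/
noncomputable def dilCompB1Q (c : DilComp f) : ℤ :=
  (Nat.card {e : G.Edge // f.DilE e ∧ ∃ a : DilVtx f,
      Quotient.mk (dilSetoid f) a = c ∧ a.1 = G.root (Quotient.out e)} : ℤ)
    - Nat.card {a : DilVtx f // Quotient.mk (dilSetoid f) a = c} + 1

end HarmonicTo


lemma sum_nat_card_fiber {α β : Type} [Fintype α] [Fintype β] (g : α → β) :
    ∑ b : β, Nat.card {a // g a = b} = Nat.card α := by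
  classical
  rw [← Nat.card_congr (Equiv.sigmaFiberEquiv g), Nat.card_eq_fintype_card,
    Fintype.card_sigma]
  exact Finset.sum_congr rfl fun b _ => Nat.card_eq_fintype_card

lemma sum_fiber_sum {α β M : Type} [Fintype α] [Fintype β] [AddCommMonoid M]
    (g : α → β) (h : α → M) :
    ∑ b : β, ∑ᶠ (a : α) (_ : g a = b), h a = ∑ a : α, h a := by
  classical
  have step : ∀ b, ∑ᶠ (a : α) (_ : g a = b), h a
      = ∑ a ∈ Finset.univ.filter (fun a => g a = b), h a := by
    intro b
    rw [finsum_eq_sum_of_fintype, Finset.sum_filter]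
    exact Finset.sum_congr rfl fun a _ => finsum_eq_if
  rw [Finset.sum_congr rfl fun b _ => step b]
  exact Finset.sum_fiberwise Finset.univ g h

section Aux

open HarmonicTo

variable {Gt G : HGraph} (f : HarmonicTo Gt G)
variable (hdeg2 : ∀ v : G.V, ∑ w ∈ Finset.univ.filter (fun w => f.fV w = v), f.dV w = 2)

include hdeg2

lemma fiberV_card (v : G.V) :
    (Finset.univ.filter (fun w => f.fV w = v)).card = if f.DilV v then 1 else 2 := by
  have hsum := hdeg2 v
  set s := Finset.univ.filter (fun w => f.fV w = v) with hs
  have hle : s.card ≤ 2 := by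
    calc s.card = ∑ _w ∈ s, 1 := by simp
    _ ≤ ∑ w ∈ s, f.dV w := Finset.sum_le_sum (fun w _ => f.dV_pos w)
    _ = 2 := hsum
  have hne : s.Nonempty := by
    by_contra h
    rw [Finset.not_nonempty_iff_eq_empty] at h
    rw [h] at hsum; simp at hsum
  have hge : 1 ≤ s.card := Finset.card_pos.mpr hne
  have hdil : f.DilV v ↔ s.card = 1 := by
    unfold HarmonicTo.DilV
    rw [Nat.card_eq_fintype_card, Fintype.card_subtype]
  by_cases h : f.DilV v
  · simp [h, hdil.mp h]
  · have h1 : s.card ≠ 1 := fun hc => h (hdil.mpr hc)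
    simp only [h, if_false]
    omega

lemma cardV_eq : Fintype.card Gt.V + (Finset.univ.filter (fun v => f.DilV v)).card
    = 2 * Fintype.card G.V := by
  have h1 : Fintype.card Gt.V
      = ∑ v : G.V, (Finset.univ.filter (fun w => f.fV w = v)).card := by
    rw [← Finset.card_univ]
    exact Finset.card_eq_sum_card_fiberwise (fun x _ => Finset.mem_univ _)
  rw [h1, Finset.card_filter, ← Finset.sum_add_distrib]
  have key : ∀ v : G.V, (Finset.univ.filter (fun w => f.fV w = v)).card
      + (if f.DilV v then 1 else 0) = 2 := by
    intro v; rw [fiberV_card f hdeg2 v]; by_cases h : f.DilV v <;> simp [h]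
  rw [Finset.sum_congr rfl (fun v _ => key v)]
  simp [Finset.card_univ, mul_comm]

lemma fiberH_sum (h : G.H) :
    ∑ x ∈ Finset.univ.filter (fun x => f.fH x = h), f.dH x = 2 := by
  have hmaps : ∀ x ∈ Finset.univ.filter (fun x => f.fH x = h),
      Gt.root x ∈ Finset.univ.filter (fun w => f.fV w = G.root h) := by
    intro x hx
    simp only [Finset.mem_filter, Finset.mem_univ, true_and] at hx ⊢
    rw [← hx, f.root_comm]
  rw [← Finset.sum_fiberwise_of_maps_to hmaps f.dH]
  have key : ∀ w ∈ Finset.univ.filter (fun w => f.fV w = G.root h),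
      ∑ x ∈ (Finset.univ.filter (fun x => f.fH x = h)).filter (fun x => Gt.root x = w), f.dH x
        = f.dV w := by
    intro w hw
    simp only [Finset.mem_filter, Finset.mem_univ, true_and] at hw
    rw [Finset.filter_filter]
    rw [f.harm w h hw.symm]
    congr 1
    ext x
    simp only [Finset.mem_filter, Finset.mem_univ, true_and]
    exact and_comm
  rw [Finset.sum_congr rfl key]
  exact hdeg2 (G.root h)

/-- The edge fiber over `G.edge h` is in bijection with the half-edge fiber over `h`. -/
lemma fiberE_card (h : G.H) :
    Nat.card {a : Gt.Edge // f.fE a = G.edge h}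
      = (Finset.univ.filter (fun x => f.fH x = h)).card := by
  have key : Nat.card {x : Gt.H // f.fH x = h}
      = Nat.card {a : Gt.Edge // f.fE a = G.edge h} := by
    apply Nat.card_eq_of_bijective
      (fun x => (⟨Gt.edge x.1, by show G.edge (f.fH x.1) = G.edge h; rw [x.2]⟩ :
        {a : Gt.Edge // f.fE a = G.edge h}))
    constructor
    · rintro ⟨x, hx⟩ ⟨y, hy⟩ hxy
      simp only [Subtype.mk.injEq] at hxy ⊢
      rcases Quotient.exact hxy with h1 | h1
      · exact h1.symm
      · exfalso
        have h2 : f.fH y = G.inv (f.fH x) := by rw [h1, f.inv_comm]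
        rw [hx, hy] at h2
        exact G.inv_ne h h2.symm
    · rintro ⟨a, ha⟩
      have ha' : G.edge (f.fH (Quotient.out a)) = G.edge h := by
        have h2 : f.fE (Quotient.mk Gt.edgeSetoid (Quotient.out a)) = G.edge h := by
          exact (congrArg f.fE (Quotient.out_eq a)).trans ha
        exact h2
      rcases Quotient.exact ha' with h1 | h1
      · exact ⟨⟨Quotient.out a, h1.symm⟩, Subtype.ext (Quotient.out_eq a)⟩
      · refine ⟨⟨Gt.inv (Quotient.out a), ?_⟩, Subtype.ext ?_⟩
        · rw [f.inv_comm]; exact h1.symm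
        · show Gt.edge (Gt.inv (Quotient.out a)) = a
          rw [Gt.edge_inv]
          exact Quotient.out_eq a
  rw [← key, Nat.card_eq_fintype_card, Fintype.card_subtype]

lemma fiberE_card_ite (e : G.Edge) :
    (Finset.univ.filter (fun a => f.fE a = e)).card = if f.DilE e then 1 else 2 := by
  set n := (Finset.univ.filter (fun a => f.fE a = e)).card with hn
  have hnat : Nat.card {a : Gt.Edge // f.fE a = e} = n := by
    rw [Nat.card_eq_fintype_card, Fintype.card_subtype]
  have hee : G.edge (Quotient.out e) = e := Quotient.out_eq e
  have hcard : n = (Finset.univ.filter (fun x => f.fH x = Quotient.out e)).card := by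
    have h2 := fiberE_card f hdeg2 (Quotient.out e)
    rw [hee] at h2
    rw [← hnat]; exact h2
  set s := Finset.univ.filter (fun x => f.fH x = Quotient.out e) with hs
  have hsum : ∑ x ∈ s, f.dH x = 2 := fiberH_sum f hdeg2 (Quotient.out e)
  have hle : s.card ≤ 2 := by
    calc s.card = ∑ _w ∈ s, 1 := by simp
    _ ≤ ∑ w ∈ s, f.dH w := Finset.sum_le_sum (fun w _ => f.dH_pos w)
    _ = 2 := hsum
  have hnonempty : s.Nonempty := by
    by_contra hcon
    rw [Finset.not_nonempty_iff_eq_empty] at hcon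
    rw [hcon] at hsum; simp at hsum
  have hge : 1 ≤ s.card := Finset.card_pos.mpr hnonempty
  have hdil : f.DilE e ↔ n = 1 := by
    unfold HarmonicTo.DilE
    rw [hnat]
  by_cases h : f.DilE e
  · simp [h, hdil.mp h]
  · have h1 : n ≠ 1 := fun hc => h (hdil.mpr hc)
    simp only [h, if_false]
    omega

lemma cardE_eq : Fintype.card Gt.Edge + (Finset.univ.filter (fun e => f.DilE e)).card
    = 2 * Fintype.card G.Edge := by
  have h1 : Fintype.card Gt.Edge
      = ∑ e : G.Edge, (Finset.univ.filter (fun a => f.fE a = e)).card := by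
    rw [← Finset.card_univ]
    exact Finset.card_eq_sum_card_fiberwise (fun x _ => Finset.mem_univ _)
  rw [h1, Finset.card_filter, ← Finset.sum_add_distrib]
  have key : ∀ e : G.Edge, (Finset.univ.filter (fun a => f.fE a = e)).card
      + (if f.DilE e then 1 else 0) = 2 := by
    intro e; rw [fiberE_card_ite f hdeg2 e]; by_cases h : f.DilE e <;> simp [h]
  rw [Finset.sum_congr rfl (fun e _ => key e)]
  simp [Finset.card_univ, mul_comm]

/-- The root of a dilated edge is a dilated vertex. -/
lemma dilV_of_dilE (h : G.H) (hd : f.DilE (G.edge h)) : f.DilV (G.root h) := by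
  have hc : (Finset.univ.filter (fun x => f.fH x = h)).card = 1 := by
    rw [← fiberE_card f hdeg2 h]; exact hd
  obtain ⟨x₀, hx₀⟩ := Finset.card_eq_one.mp hc
  have hx₀mem : x₀ ∈ Finset.univ.filter (fun x => f.fH x = h) := by
    rw [hx₀]; exact Finset.mem_singleton_self x₀
  have hfx₀ : f.fH x₀ = h := by simpa using hx₀mem
  have hdH : f.dH x₀ = 2 := by
    have h2 := fiberH_sum f hdeg2 h
    rw [hx₀, Finset.sum_singleton] at h2; exact h2
  have hroot : G.root h = f.fV (Gt.root x₀) := by rw [← hfx₀, f.root_comm]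
  have hdV : 2 ≤ f.dV (Gt.root x₀) := by
    rw [f.harm (Gt.root x₀) h hroot]
    calc 2 = f.dH x₀ := hdH.symm
    _ ≤ _ := Finset.single_le_sum (fun i _ => Nat.zero_le _) (by simp [hfx₀])
  have hsum := hdeg2 (f.fV (Gt.root x₀))
  set s := Finset.univ.filter (fun w => f.fV w = f.fV (Gt.root x₀)) with hs
  have hmem : Gt.root x₀ ∈ s := by simp [hs]
  have h2 : f.dV (Gt.root x₀) + ∑ w ∈ s.erase (Gt.root x₀), f.dV w = 2 := by
    rw [Finset.add_sum_erase s f.dV hmem]; exact hsum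
  have hcard0 : (s.erase (Gt.root x₀)).card = 0 := by
    by_contra hh
    obtain ⟨w, hw⟩ := Finset.card_pos.mp (Nat.pos_of_ne_zero hh)
    have hp := f.dV_pos w
    have hle := Finset.single_le_sum (f := f.dV) (fun i _ => Nat.zero_le _) hw
    omega
  have hscard : s.card = 1 := by
    have h3 := Finset.card_erase_add_one hmem
    omega
  have hfin : f.DilV (f.fV (Gt.root x₀)) := by
    unfold HarmonicTo.DilV
    rw [Nat.card_eq_fintype_card, Fintype.card_subtype]
    exact hscard
  rwa [← hroot] at hfin

lemma dilV_out (e : G.Edge) (hd : f.DilE e) : f.DilV (G.root (Quotient.out e)) := by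
  apply dilV_of_dilE f hdeg2
  have hee : G.edge (Quotient.out e) = e := Quotient.out_eq e
  rw [hee]; exact hd

/-- The component of a dilated edge. -/
noncomputable def kap : {e : G.Edge // f.DilE e} → DilComp f :=
  fun e => Quotient.mk (dilSetoid f) ⟨G.root (Quotient.out e.1), dilV_out f hdeg2 e.1 e.2⟩

lemma sum_comp_cardE [Fintype (DilComp f)] :
    ∑ c : DilComp f, Nat.card {e : G.Edge // f.DilE e ∧ ∃ a : DilVtx f,
        Quotient.mk (dilSetoid f) a = c ∧ a.1 = G.root (Quotient.out e)}
    = (Finset.univ.filter (fun e => f.DilE e)).card := by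
  have step : ∀ c : DilComp f, Nat.card {e : G.Edge // f.DilE e ∧ ∃ a : DilVtx f,
        Quotient.mk (dilSetoid f) a = c ∧ a.1 = G.root (Quotient.out e)}
      = Nat.card {e' : {e : G.Edge // f.DilE e} // kap f hdeg2 e' = c} := by
    intro c
    apply Nat.card_congr
    apply Equiv.symm
    refine (Equiv.subtypeSubtypeEquivSubtypeExists _ _).trans (Equiv.subtypeEquivRight ?_)
    intro e
    constructor
    · rintro ⟨hd, hk⟩
      exact ⟨hd, ⟨G.root (Quotient.out e), dilV_out f hdeg2 e hd⟩, hk, rfl⟩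
    · rintro ⟨hd, a, hac, hae⟩
      refine ⟨hd, ?_⟩
      show Quotient.mk (dilSetoid f) ⟨G.root (Quotient.out e), dilV_out f hdeg2 e hd⟩ = c
      rwa [show (⟨G.root (Quotient.out e), dilV_out f hdeg2 e hd⟩ : DilVtx f) = a from
        Subtype.ext hae.symm]
  rw [Finset.sum_congr rfl (fun c _ => step c)]
  have h2 : ∑ c : DilComp f, Nat.card {e' : {e : G.Edge // f.DilE e} // kap f hdeg2 e' = c}
      = Nat.card {e : G.Edge // f.DilE e} := sum_nat_card_fiber (kap f hdeg2)
  rw [h2, Nat.card_eq_fintype_card, Fintype.card_subtype]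

omit hdeg2 in
lemma sum_comp_cardV [iC : Fintype (DilComp f)] [iV : Fintype (DilVtx f)] :
    ∑ c : DilComp f, Nat.card {a : DilVtx f // Quotient.mk (dilSetoid f) a = c}
    = (Finset.univ.filter (fun v => f.DilV v)).card := by
  have h2 : ∑ c : DilComp f,
        Nat.card {a : DilVtx f // Quotient.mk (dilSetoid f) a = c}
      = Nat.card (DilVtx f) :=
    @sum_nat_card_fiber (DilVtx f) (DilComp f) iV iC
      (fun a : DilVtx f => Quotient.mk (dilSetoid f) a)
  rw [h2]
  show Nat.card {x : G.V // f.DilV x} = _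
  rw [Nat.card_eq_fintype_card, Fintype.card_subtype]

omit hdeg2 in
lemma sum_comp_genus [iC : Fintype (DilComp f)] [iV : Fintype (DilVtx f)] (gV : G.V → ℕ) :
    ∑ c : DilComp f, ∑ᶠ (a : DilVtx f) (_ : Quotient.mk (dilSetoid f) a = c), (gV a.1 : ℤ)
    = ∑ x ∈ Finset.univ.filter (fun v => f.DilV v), (gV x : ℤ) := by
  have h2 : ∑ c : DilComp f,
        ∑ᶠ (a : DilVtx f) (_ : Quotient.mk (dilSetoid f) a = c), (gV a.1 : ℤ)
      = ∑ a : DilVtx f, (gV a.1 : ℤ) :=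
    @sum_fiber_sum (DilVtx f) (DilComp f) ℤ iV iC _
      (fun a : DilVtx f => Quotient.mk (dilSetoid f) a) (fun a => (gV a.1 : ℤ))
  rw [h2]
  exact (Finset.sum_subtype (p := fun x => f.DilV x) (F := iV)
    (Finset.univ.filter fun v => f.DilV v) (fun x => by simp) (fun x => (gV x : ℤ))).symm

end Aux

/-- For a double cover `π : G̃ → G` of weighted graphs of genus `g`, with
`G₁, …, G_d` the connected components of the dilation subgraph, the torus rank satisfies
`t(G̃/G) = b₁(G̃) − b₁(G) = g − 1 − Σᵢ(g(Gᵢ) − 1) − Σ_{x ∉ G_dil} g(x)`; equivalently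
`t(G̃/G) = b₁(G) − 1 − Σᵢ(b₁(Gᵢ) − 1)`. -/
theorem torus_rank_formula (Gt G : HGraph) (gVt : Gt.V → ℕ) (gV : G.V → ℕ)
    (f : HarmonicTo Gt G) (hconnt : Gt.Connected) (hconn : G.Connected)
    (hunram : ∀ w : Gt.V, f.Ram (fun u => (gVt u : ℤ)) (fun u => (gV u : ℤ)) w = 0)
    (hdeg2 : ∀ v : G.V, ∑ w ∈ Finset.univ.filter (fun w => f.fV w = v), f.dV w = 2) :
    (((Fintype.card Gt.Edge : ℤ) - Fintype.card Gt.V + 1)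
        - ((Fintype.card G.Edge : ℤ) - Fintype.card G.V + 1))
      = G.genusZ (fun u => (gV u : ℤ)) - 1
        - (∑ᶠ c : HarmonicTo.DilComp f, (f.dilCompGenusQ gV c - 1))
        - (∑ᶠ (x : G.V) (_ : ¬ f.DilV x), (gV x : ℤ)) ∧
    (((Fintype.card Gt.Edge : ℤ) - Fintype.card Gt.V + 1)
        - ((Fintype.card G.Edge : ℤ) - Fintype.card G.V + 1))
      = ((Fintype.card G.Edge : ℤ) - Fintype.card G.V + 1) - 1
        - ∑ᶠ c : HarmonicTo.DilComp f, (f.dilCompB1Q c - 1) := by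
  letI iC : Fintype (HarmonicTo.DilComp f) := Fintype.ofFinite _
  letI iV : Fintype (HarmonicTo.DilVtx f) := Fintype.ofFinite _
  have hV' : (Fintype.card Gt.V : ℤ)
      + ((Finset.univ.filter (fun v => f.DilV v)).card : ℤ)
      = 2 * Fintype.card G.V := by exact_mod_cast cardV_eq f hdeg2
  have hE' : (Fintype.card Gt.Edge : ℤ)
      + ((Finset.univ.filter (fun e => f.DilE e)).card : ℤ)
      = 2 * Fintype.card G.Edge := by exact_mod_cast cardE_eq f hdeg2
  have hSE : ∑ c : HarmonicTo.DilComp f,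
      (Nat.card {e : G.Edge // f.DilE e ∧ ∃ a : HarmonicTo.DilVtx f,
        Quotient.mk (HarmonicTo.dilSetoid f) a = c ∧ a.1 = G.root (Quotient.out e)} : ℤ)
      = ((Finset.univ.filter (fun e => f.DilE e)).card : ℤ) := by
    exact_mod_cast sum_comp_cardE f hdeg2
  have hSV : ∑ c : HarmonicTo.DilComp f,
      (Nat.card {a : HarmonicTo.DilVtx f // Quotient.mk (HarmonicTo.dilSetoid f) a = c} : ℤ)
      = ((Finset.univ.filter (fun v => f.DilV v)).card : ℤ) := by
    exact_mod_cast sum_comp_cardV f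
  have hSG := sum_comp_genus f (gV := gV)
  have hgen : ∑ᶠ c : HarmonicTo.DilComp f, (f.dilCompGenusQ gV c - 1)
      = ((Finset.univ.filter (fun e => f.DilE e)).card : ℤ)
        - ((Finset.univ.filter (fun v => f.DilV v)).card : ℤ)
        + ∑ x ∈ Finset.univ.filter (fun v => f.DilV v), (gV x : ℤ) := by
    rw [finsum_eq_sum_of_fintype]
    have expand : ∀ c : HarmonicTo.DilComp f, f.dilCompGenusQ gV c - 1
        = ((Nat.card {e : G.Edge // f.DilE e ∧ ∃ a : HarmonicTo.DilVtx f,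
              Quotient.mk (HarmonicTo.dilSetoid f) a = c ∧ a.1 = G.root (Quotient.out e)} : ℤ)
            - (Nat.card {a : HarmonicTo.DilVtx f //
                Quotient.mk (HarmonicTo.dilSetoid f) a = c} : ℤ))
          + ∑ᶠ (a : HarmonicTo.DilVtx f)
              (_ : Quotient.mk (HarmonicTo.dilSetoid f) a = c), (gV a.1 : ℤ) := by
      intro c
      unfold HarmonicTo.dilCompGenusQ
      ring
    rw [Finset.sum_congr rfl fun c _ => expand c, Finset.sum_add_distrib,
      Finset.sum_sub_distrib, hSE, hSV, hSG]
  have hb1 : ∑ᶠ c : HarmonicTo.DilComp f, (f.dilCompB1Q c - 1)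
      = ((Finset.univ.filter (fun e => f.DilE e)).card : ℤ)
        - ((Finset.univ.filter (fun v => f.DilV v)).card : ℤ) := by
    rw [finsum_eq_sum_of_fintype]
    have expand : ∀ c : HarmonicTo.DilComp f, f.dilCompB1Q c - 1
        = (Nat.card {e : G.Edge // f.DilE e ∧ ∃ a : HarmonicTo.DilVtx f,
              Quotient.mk (HarmonicTo.dilSetoid f) a = c ∧ a.1 = G.root (Quotient.out e)} : ℤ)
          - (Nat.card {a : HarmonicTo.DilVtx f //
              Quotient.mk (HarmonicTo.dilSetoid f) a = c} : ℤ) := by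
      intro c
      unfold HarmonicTo.dilCompB1Q
      ring
    rw [Finset.sum_congr rfl fun c _ => expand c, Finset.sum_sub_distrib, hSE, hSV]
  have hnd : ∑ᶠ (x : G.V) (_ : ¬ f.DilV x), (gV x : ℤ)
      = ∑ x ∈ Finset.univ.filter (fun x => ¬ f.DilV x), (gV x : ℤ) := by
    rw [finsum_eq_sum_of_fintype, Finset.sum_filter]
    exact Finset.sum_congr rfl fun a _ => finsum_eq_if
  have htot : ∑ x ∈ Finset.univ.filter (fun v => f.DilV v), (gV x : ℤ)
      + ∑ x ∈ Finset.univ.filter (fun x => ¬ f.DilV x), (gV x : ℤ)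
      = ∑ x : G.V, (gV x : ℤ) := by
    rw [Finset.sum_filter, Finset.sum_filter, ← Finset.sum_add_distrib]
    exact Finset.sum_congr rfl fun a _ => by by_cases h : f.DilV a <;> simp [h]
  have hgenus : G.genusZ (fun u => (gV u : ℤ))
      = (Fintype.card G.Edge : ℤ) - Fintype.card G.V + 1 + ∑ x : G.V, (gV x : ℤ) := by
    unfold HGraph.genusZ
    rfl
  rw [hgen, hb1, hnd, hgenus]
  constructor <;> linarith
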